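/- On a Lie groupoid G ⇉ M, for every vector field x on M there exists a star vector field (ξ,x) on G, i.e. a vector field ξ on G with T(α)∘ξ = x∘α and ξ∘1 = T(1)∘x. -/

import Mathlib

open Manifold

/- STATEMENT 13.  `G ⇉ M` is a Lie groupoid; in particular the source map
`α` is a surjective submersion and `1 : M → G` is the identity section.
The theorem: every vector field `x` on `M` lifts to a *star vector field*
`(ξ, x)` on `G`, i.e. a smooth vector field `ξ` on `G` with
`T(α) ∘ ξ = x ∘ α` and `ξ ∘ 1 = T(1) ∘ x`. -/

/-- A Lie groupoid `G ⇉ M` over smooth manifolds (multiplication idealized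
as a total smooth map, with the groupoid laws imposed on composable
pairs `src h = trg g`, the only pairs ever used below). -/
structure LieGroupoidStr (EG EM : Type*) [NormedAddCommGroup EG] [NormedSpace ℝ EG]
    [NormedAddCommGroup EM] [NormedSpace ℝ EM]
    (G M : Type*) [TopologicalSpace G] [ChartedSpace EG G]
    [TopologicalSpace M] [ChartedSpace EM M] where
  src : G → M
  trg : G → M
  one : M → G
  inv : G → G
  mul : G × G → G
  smooth_src : ContMDiff 𝓘(ℝ, EG) 𝓘(ℝ, EM) (⊤ : ℕ∞) src
  smooth_trg : ContMDiff 𝓘(ℝ, EG) 𝓘(ℝ, EM) (⊤ : ℕ∞) trg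
  smooth_one : ContMDiff 𝓘(ℝ, EM) 𝓘(ℝ, EG) (⊤ : ℕ∞) one
  smooth_inv : ContMDiff 𝓘(ℝ, EG) 𝓘(ℝ, EG) (⊤ : ℕ∞) inv
  smooth_mul : ContMDiff (𝓘(ℝ, EG).prod 𝓘(ℝ, EG)) 𝓘(ℝ, EG) (⊤ : ℕ∞) mul
  src_one : ∀ m, src (one m) = m
  trg_one : ∀ m, trg (one m) = m
  src_mul : ∀ h g, src h = trg g → src (mul (h, g)) = src g
  trg_mul : ∀ h g, src h = trg g → trg (mul (h, g)) = trg h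
  mul_one : ∀ g, mul (g, one (src g)) = g
  one_mul : ∀ g, mul (one (trg g), g) = g
  mul_assoc : ∀ k h g, src k = trg h → src h = trg g →
    mul (mul (k, h), g) = mul (k, mul (h, g))
  src_inv : ∀ g, src (inv g) = trg g
  trg_inv : ∀ g, trg (inv g) = src g
  mul_inv : ∀ g, mul (g, inv g) = one (trg g)
  inv_mul : ∀ g, mul (inv g, g) = one (src g)

variable {EG EM : Type*} [NormedAddCommGroup EG] [NormedSpace ℝ EG]
  [NormedAddCommGroup EM] [NormedSpace ℝ EM]
  {G M : Type*} [TopologicalSpace G] [ChartedSpace EG G]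
  [IsManifold 𝓘(ℝ, EG) (⊤ : ℕ∞) G]
  [TopologicalSpace M] [ChartedSpace EM M]
  [IsManifold 𝓘(ℝ, EM) (⊤ : ℕ∞) M]

/-- `(ξ, x)` is a multiplicative vector field on the Lie groupoid `S`:
`ξ : G → TG` is a morphism of Lie groupoids over `x : M → TM` into the
tangent groupoid `TG ⇉ TM`. -/
def IsMultiplicativeVF (S : LieGroupoidStr EG EM G M)
    (ξ : ∀ g : G, TangentSpace 𝓘(ℝ, EG) g)
    (x : ∀ m : M, TangentSpace 𝓘(ℝ, EM) m) : Prop :=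
  (∀ g, mfderiv 𝓘(ℝ, EG) 𝓘(ℝ, EM) S.src g (ξ g) = x (S.src g)) ∧
  (∀ g, mfderiv 𝓘(ℝ, EG) 𝓘(ℝ, EM) S.trg g (ξ g) = x (S.trg g)) ∧
  (∀ h g, S.src h = S.trg g →
    ξ (S.mul (h, g)) =
      mfderiv (𝓘(ℝ, EG).prod 𝓘(ℝ, EG)) 𝓘(ℝ, EG) S.mul (h, g) (ξ h, ξ g))

section StarVFAux

set_option linter.unusedSectionVars false

open Set Function Bundle Topology

variable {EX : Type*} [NormedAddCommGroup EX] [NormedSpace ℝ EX]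
  {X : Type*} [TopologicalSpace X] [ChartedSpace EX X]
  [IsManifold 𝓘(ℝ, EX) (⊤ : ℕ∞) X]

lemma tcc_left_inv {q g : X} (h : g ∈ (extChartAt 𝓘(ℝ, EX) q).source) (v : EX) :
    tangentCoordChange 𝓘(ℝ, EX) q g g (tangentCoordChange 𝓘(ℝ, EX) g q g v) = v := by
  rw [tangentCoordChange_comp (v := v) ⟨⟨mem_extChartAt_source g, h⟩, mem_extChartAt_source g⟩]
  exact tangentCoordChange_self (mem_extChartAt_source g)

lemma tcc_right_inv {q g : X} (h : g ∈ (extChartAt 𝓘(ℝ, EX) q).source) (v : EX) :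
    tangentCoordChange 𝓘(ℝ, EX) g q g (tangentCoordChange 𝓘(ℝ, EX) q g g v) = v := by
  rw [tangentCoordChange_comp (v := v) ⟨⟨h, mem_extChartAt_source g⟩, h⟩]
  exact tangentCoordChange_self h

lemma triv_snd (q : X) (z : TangentBundle 𝓘(ℝ, EX) X) :
    (trivializationAt EX (TangentSpace 𝓘(ℝ, EX)) q z).2 =
      tangentCoordChange 𝓘(ℝ, EX) z.proj q z.proj z.2 := rfl

variable {EN : Type*} [NormedAddCommGroup EN] [NormedSpace ℝ EN]
  {N : Type*} [TopologicalSpace N] [ChartedSpace EN N]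
  [IsManifold 𝓘(ℝ, EN) (⊤ : ℕ∞) N]

lemma contMDiffAt_coordChange_comp {p₁ q₀ : X} {f : N → X} {n₁ : N}
    (hf : ContMDiffAt 𝓘(ℝ, EN) 𝓘(ℝ, EX) (⊤ : ℕ∞) f n₁)
    (h1 : f n₁ ∈ (chartAt EX p₁).source) (h2 : f n₁ ∈ (chartAt EX q₀).source) :
    ContMDiffAt 𝓘(ℝ, EN) 𝓘(ℝ, EX →L[ℝ] EX) (⊤ : ℕ∞)
      (fun n => tangentCoordChange 𝓘(ℝ, EX) p₁ q₀ (f n)) n₁ := by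
  have h := ((tangentBundleCore 𝓘(ℝ, EX) X).contMDiffOn_coordChange (n := ((⊤ : ℕ∞) : WithTop ℕ∞))
    (h := tangentBundleCore.isContMDiff (I := 𝓘(ℝ, EX)) (M := X) (n := ((⊤ : ℕ∞) : WithTop ℕ∞))
      (h := (inferInstance : IsManifold 𝓘(ℝ, EX) ((⊤ : ℕ∞) : WithTop ℕ∞) X))) 𝓘(ℝ, EX)
    (achart EX p₁) (achart EX q₀))
  have hmem : (tangentBundleCore 𝓘(ℝ, EX) X).baseSet (achart EX p₁) ∩
      (tangentBundleCore 𝓘(ℝ, EX) X).baseSet (achart EX q₀) ∈ 𝓝 (f n₁) := by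
    simp only [tangentBundleCore_baseSet, coe_achart]
    exact (((chartAt EX p₁).open_source.inter (chartAt EX q₀).open_source).mem_nhds ⟨h1, h2⟩)
  exact (h.contMDiffAt hmem).comp n₁ hf

/-- Re-pinning the principal part of a smooth family of tangent vectors to a fixed chart. -/
lemma contMDiffAt_repin {Ψ : N → TangentBundle 𝓘(ℝ, EX) X}
    (hΨ : ContMDiff 𝓘(ℝ, EN) 𝓘(ℝ, EX).tangent (⊤ : ℕ∞) Ψ) (q₀ : X) {n₁ : N}
    (hq : (Ψ n₁).proj ∈ (chartAt EX q₀).source) :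
    ContMDiffAt 𝓘(ℝ, EN) 𝓘(ℝ, EX) (⊤ : ℕ∞)
      (fun n => tangentCoordChange 𝓘(ℝ, EX) (Ψ n).proj q₀ (Ψ n).proj (Ψ n).2) n₁ := by
  obtain ⟨hp, hs⟩ := (Bundle.contMDiffAt_totalSpace).1 (hΨ.contMDiffAt (x := n₁))
  set p₁ := (Ψ n₁).proj with hp₁
  have hev : ∀ᶠ n in 𝓝 n₁, (Ψ n).proj ∈ (chartAt EX p₁).source ∩ (chartAt EX q₀).source :=
    hp.continuousAt.preimage_mem_nhds
      (((chartAt EX p₁).open_source.inter (chartAt EX q₀).open_source).mem_nhds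
        ⟨mem_chart_source _ _, hq⟩)
  have hsmooth : ContMDiffAt 𝓘(ℝ, EN) 𝓘(ℝ, EX) (⊤ : ℕ∞)
      (fun n => tangentCoordChange 𝓘(ℝ, EX) p₁ q₀ ((Ψ n).proj)
        ((trivializationAt EX (TangentSpace 𝓘(ℝ, EX)) p₁ (Ψ n)).2)) n₁ :=
    (contMDiffAt_coordChange_comp hp (mem_chart_source _ _) hq).clm_apply hs
  refine hsmooth.congr_of_eventuallyEq ?_
  filter_upwards [hev] with n hn
  rw [triv_snd]
  have hmem : (Ψ n).proj ∈ (extChartAt 𝓘(ℝ, EX) (Ψ n).proj).source ∩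
      (extChartAt 𝓘(ℝ, EX) p₁).source ∩ (extChartAt 𝓘(ℝ, EX) q₀).source := by
    simp only [extChartAt_source]
    exact ⟨⟨mem_chart_source _ _, hn.1⟩, hn.2⟩
  exact (tangentCoordChange_comp (I := 𝓘(ℝ, EX)) (M := X) (v := ((Ψ n).snd : EX)) hmem).symm

end StarVFAux
section Patch

set_option linter.unusedSectionVars false

open Set Function Bundle Topology Filter

lemma exists_global_section_of_local [T2Space G] [SigmaCompactSpace G] [FiniteDimensional ℝ EG]
    (t : ∀ g : G, Set (TangentSpace 𝓘(ℝ, EG) g)) (ht : ∀ g, Convex ℝ (t g))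
    (H : ∀ g₀ : G, ∃ U : Set G, IsOpen U ∧ g₀ ∈ U ∧ ∃ s : ∀ g : G, TangentSpace 𝓘(ℝ, EG) g,
      (∀ g ∈ U, ContMDiffAt 𝓘(ℝ, EG) 𝓘(ℝ, EG).tangent (⊤ : ℕ∞)
        (fun g => (⟨g, s g⟩ : TangentBundle 𝓘(ℝ, EG) G)) g) ∧ ∀ g ∈ U, s g ∈ t g) :
    ∃ ξ : ∀ g : G, TangentSpace 𝓘(ℝ, EG) g,
      ContMDiff 𝓘(ℝ, EG) 𝓘(ℝ, EG).tangent (⊤ : ℕ∞)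
        (fun g => (⟨g, ξ g⟩ : TangentBundle 𝓘(ℝ, EG) G)) ∧ ∀ g, ξ g ∈ t g := by
  classical
  choose U hUo hU₀ s hs hst using H
  obtain ⟨f, hf⟩ := SmoothPartitionOfUnity.exists_isSubordinate 𝓘(ℝ, EG) isClosed_univ U hUo
    (fun g _ => mem_iUnion.2 ⟨g, hU₀ g⟩)
  set s' : G → ∀ g : G, TangentSpace 𝓘(ℝ, EG) g :=
    fun i g => if g ∈ U i then s i g else 0 with hs'def
  refine ⟨fun g => ∑ᶠ i, f i g • s' i g, ?_, ?_⟩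
  · intro g₁
    rw [Bundle.contMDiffAt_section]
    set e := trivializationAt EG (TangentSpace 𝓘(ℝ, EG)) g₁ with he
    have hsmooth : ContMDiffAt 𝓘(ℝ, EG) 𝓘(ℝ, EG) (⊤ : ℕ∞)
        (fun g => ∑ᶠ i, f i g • (e ⟨g, s' i g⟩).2) g₁ := by
      apply f.contMDiffAt_finsum
      intro i hi
      have hiU : g₁ ∈ U i := hf i hi
      have h1 : ContMDiffAt 𝓘(ℝ, EG) 𝓘(ℝ, EG) (⊤ : ℕ∞) (fun g => (e ⟨g, s i g⟩).2) g₁ := by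
        have h2 := hs i g₁ hiU
        rw [Bundle.contMDiffAt_section] at h2
        exact h2
      refine h1.congr_of_eventuallyEq ?_
      filter_upwards [(hUo i).mem_nhds hiU] with g hg
      simp only [hs'def, if_pos hg]
    refine hsmooth.congr_of_eventuallyEq ?_
    filter_upwards [(chartAt EG g₁).open_source.mem_nhds (mem_chart_source _ _)] with g hg
    have hgb : g ∈ e.baseSet := hg
    have hfin : (Function.support fun i => f i g • s' i g).Finite := by
      apply (f.locallyFinite.point_finite g).subset
      intro i hi
      simp only [Function.mem_support] at hi
      by_contra hig
      simp only [Set.mem_setOf_eq, Function.mem_support, Ne, not_not] at hig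
      rw [hig, zero_smul] at hi
      exact hi rfl
    have hL := e.linear ℝ hgb
    let L : TangentSpace 𝓘(ℝ, EG) g →ₗ[ℝ] EG := IsLinearMap.mk' (fun v => (e ⟨g, v⟩).2) hL
    have hLe : ∀ v : TangentSpace 𝓘(ℝ, EG) g, (e ⟨g, v⟩).2 = L v := fun v => rfl
    have hplift : (Function.support ((fun i => f i g • s' i g) ∘ PLift.down)).Finite := by
      rw [Function.support_comp_eq_preimage]
      exact hfin.preimage PLift.down_injective.injOn
    have hmap : L (∑ᶠ i, f i g • s' i g) = ∑ᶠ i, L (f i g • s' i g) :=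
      AddMonoidHom.map_finsum_plift L.toAddMonoidHom _ hplift
    rw [hLe, hmap]
    exact finsum_congr fun i => by rw [map_smul]; rfl
  · intro g
    refine (ht g).finsum_mem (fun i => f.nonneg i g) (f.sum_eq_one (mem_univ g)) ?_
    intro i hi
    have hiU : g ∈ U i := hf i (subset_closure (Function.mem_support.2 hi))
    simpa only [hs'def, if_pos hiU] using hst i g hiU

end Patch
section LocalLift

set_option linter.unusedSectionVars false
set_option maxHeartbeats 1000000

open Set Function Bundle Topology Filter

lemma exists_local_lift [FiniteDimensional ℝ EG]
    (S : LieGroupoidStr EG EM G M)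
    (hsub : ∀ g, Function.Surjective (mfderiv 𝓘(ℝ, EG) 𝓘(ℝ, EM) S.src g))
    (x : ∀ m : M, TangentSpace 𝓘(ℝ, EM) m)
    (hx : ContMDiff 𝓘(ℝ, EM) 𝓘(ℝ, EM).tangent (⊤ : ℕ∞)
      (fun m => (⟨m, x m⟩ : TangentBundle 𝓘(ℝ, EM) M)))
    (g₀ : G) (θ : G → EG) (W : Set G) (hWo : IsOpen W) (hW₀ : g₀ ∈ W)
    (hθ : ∀ g ∈ W, ContMDiffAt 𝓘(ℝ, EG) 𝓘(ℝ, EG) (⊤ : ℕ∞) θ g) :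
    ∃ U : Set G, IsOpen U ∧ g₀ ∈ U ∧ U ⊆ W ∧ U ⊆ (chartAt EG g₀).source ∧
      ∃ s : ∀ g : G, TangentSpace 𝓘(ℝ, EG) g,
        (∀ g ∈ U, ContMDiffAt 𝓘(ℝ, EG) 𝓘(ℝ, EG).tangent (⊤ : ℕ∞)
          (fun g => (⟨g, s g⟩ : TangentBundle 𝓘(ℝ, EG) G)) g) ∧
        (∀ g ∈ U, mfderiv 𝓘(ℝ, EG) 𝓘(ℝ, EM) S.src g (s g) = x (S.src g)) ∧
        (∀ g ∈ U, mfderiv 𝓘(ℝ, EG) 𝓘(ℝ, EM) S.src g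
            (tangentCoordChange 𝓘(ℝ, EG) g₀ g g (θ g)) = x (S.src g) →
          s g = tangentCoordChange 𝓘(ℝ, EG) g₀ g g (θ g)) := by
  classical
  set m₀ := S.src g₀ with hm₀
  -- `EM` is finite dimensional
  set D₀ : EG →L[ℝ] EM := mfderiv 𝓘(ℝ, EG) 𝓘(ℝ, EM) S.src g₀ with hD₀
  have hsurj : Function.Surjective D₀ := hsub g₀
  haveI : FiniteDimensional ℝ EM :=
    Module.Finite.of_surjective (D₀ : EG →ₗ[ℝ] EM) hsurj
  -- a continuous linear right inverse `C` of `mfderiv src g₀`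
  obtain ⟨φ, hφ⟩ := LinearMap.exists_rightInverse_of_surjective
    (D₀ : EG →ₗ[ℝ] EM) (LinearMap.range_eq_top.2 hsurj)
  set C : EM →L[ℝ] EG := φ.toContinuousLinearMap with hC
  have hDC : ∀ v, D₀ (C v) = v := by
    intro v
    have := LinearMap.ext_iff.1 hφ v
    simpa [hC] using this
  -- the derivative of `src` in the coordinates pinned at `g₀`
  set A : G → EG →L[ℝ] EM := inTangentCoordinates 𝓘(ℝ, EG) 𝓘(ℝ, EM) id S.src
    (fun g => mfderiv 𝓘(ℝ, EG) 𝓘(ℝ, EM) S.src g) g₀ with hA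
  set U₁ : Set G := (W ∩ (chartAt EG g₀).source) ∩ S.src ⁻¹' (chartAt EM m₀).source with hU₁
  have hU₁o : IsOpen U₁ :=
    ((hWo.inter (chartAt EG g₀).open_source).inter
      ((chartAt EM m₀).open_source.preimage S.smooth_src.continuous))
  have hU₁₀ : g₀ ∈ U₁ := ⟨⟨hW₀, mem_chart_source _ _⟩, mem_chart_source _ _⟩
  -- pointwise formula for `A` on `U₁`
  have hF3 : ∀ g ∈ U₁, ∀ v : EG, A g v =
      tangentCoordChange 𝓘(ℝ, EM) (S.src g) m₀ (S.src g)
        (mfderiv 𝓘(ℝ, EG) 𝓘(ℝ, EM) S.src g (tangentCoordChange 𝓘(ℝ, EG) g₀ g g v)) := by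
    intro g hg v
    erw [hA, inTangentCoordinates_eq id S.src _ (x₀ := g₀) (x := g) hg.1.2 hg.2]
    rfl
  -- smoothness of `A` on `U₁`
  have hF2 : ∀ g₁ ∈ U₁, ContMDiffAt 𝓘(ℝ, EG) 𝓘(ℝ, EG →L[ℝ] EM) (⊤ : ℕ∞) A g₁ := by
    intro g₁ hg₁
    have hA' : ContMDiffAt 𝓘(ℝ, EG) 𝓘(ℝ, EG →L[ℝ] EM) (⊤ : ℕ∞)
        (inTangentCoordinates 𝓘(ℝ, EG) 𝓘(ℝ, EM) id S.src
          (fun g => mfderiv 𝓘(ℝ, EG) 𝓘(ℝ, EM) S.src g) g₁) g₁ :=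
      (S.smooth_src.contMDiffAt).mfderiv_const (by simp)
    have hout : ContMDiffAt 𝓘(ℝ, EG) 𝓘(ℝ, EM →L[ℝ] EM) (⊤ : ℕ∞)
        (fun g => tangentCoordChange 𝓘(ℝ, EM) (S.src g₁) m₀ (S.src g)) g₁ :=
      contMDiffAt_coordChange_comp S.smooth_src.contMDiffAt (mem_chart_source _ _) hg₁.2
    have hin : ContMDiffAt 𝓘(ℝ, EG) 𝓘(ℝ, EG →L[ℝ] EG) (⊤ : ℕ∞)
        (fun g => tangentCoordChange 𝓘(ℝ, EG) g₀ g₁ g) g₁ :=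
      contMDiffAt_coordChange_comp contMDiffAt_id hg₁.1.2 (mem_chart_source _ _)
    have hcomb := hout.clm_comp (hA'.clm_comp hin)
    refine hcomb.congr_of_eventuallyEq ?_
    have hV : ∀ᶠ g in 𝓝 g₁, g ∈ U₁ ∧ g ∈ (chartAt EG g₁).source ∧
        S.src g ∈ (chartAt EM (S.src g₁)).source := by
      have h1 : ∀ᶠ g in 𝓝 g₁, g ∈ U₁ := hU₁o.mem_nhds hg₁
      have h2 : ∀ᶠ g in 𝓝 g₁, g ∈ (chartAt EG g₁).source :=
        (chartAt EG g₁).open_source.mem_nhds (mem_chart_source _ _)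
      have h3 : ∀ᶠ g in 𝓝 g₁, S.src g ∈ (chartAt EM (S.src g₁)).source :=
        S.smooth_src.continuous.continuousAt.preimage_mem_nhds
          ((chartAt EM (S.src g₁)).open_source.mem_nhds (mem_chart_source _ _))
      filter_upwards [h1, h2, h3] with g hg1 hg2 hg3 using ⟨hg1, hg2, hg3⟩
    filter_upwards [hV] with g hg
    obtain ⟨hgU, hgc, hgsc⟩ := hg
    apply ContinuousLinearMap.ext
    intro v
    rw [hF3 g hgU v]
    show _ = tangentCoordChange 𝓘(ℝ, EM) (S.src g₁) m₀ (S.src g)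
      ((inTangentCoordinates 𝓘(ℝ, EG) 𝓘(ℝ, EM) id S.src
        (fun g => mfderiv 𝓘(ℝ, EG) 𝓘(ℝ, EM) S.src g) g₁ g)
        (tangentCoordChange 𝓘(ℝ, EG) g₀ g₁ g v))
    erw [inTangentCoordinates_eq id S.src _ (x₀ := g₁) (x := g) hgc hgsc]
    show _ = tangentCoordChange 𝓘(ℝ, EM) (S.src g₁) m₀ (S.src g)
      (tangentCoordChange 𝓘(ℝ, EM) (S.src g) (S.src g₁) (S.src g)
        (mfderiv 𝓘(ℝ, EG) 𝓘(ℝ, EM) S.src g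
          (tangentCoordChange 𝓘(ℝ, EG) g₁ g g (tangentCoordChange 𝓘(ℝ, EG) g₀ g₁ g v))))
    erw [tangentCoordChange_comp (v := v), tangentCoordChange_comp]
    · simp only [extChartAt_source]
      exact ⟨⟨mem_chart_source _ _, hgsc⟩, hgU.2⟩
    · simp only [extChartAt_source]
      exact ⟨⟨hgU.1.2, hgc⟩, mem_chart_source _ _⟩
  -- the neighbourhood `U`
  set U : Set G := {g | g ∈ U₁ ∧ IsUnit (A g ∘L C)} with hU
  have hsubU₁ : U ⊆ U₁ := fun g hg => hg.1
  have hUo : IsOpen U := by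
    rw [isOpen_iff_mem_nhds]
    rintro g₁ ⟨hg₁, hunit⟩
    have hcont : ContinuousAt (fun g => A g ∘L C) g₁ :=
      ((hF2 g₁ hg₁).clm_comp contMDiffAt_const).continuousAt
    have h2 : (fun g => A g ∘L C) ⁻¹' {y : EM →L[ℝ] EM | IsUnit y} ∈ 𝓝 g₁ :=
      hcont.preimage_mem_nhds (Units.isOpen.mem_nhds hunit)
    filter_upwards [hU₁o.mem_nhds hg₁, h2] with g hg1 hg2 using ⟨hg1, hg2⟩
  have hAg₀ : ∀ v, A g₀ v = D₀ v := by
    intro v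
    erw [hF3 g₀ hU₁₀ v, tangentCoordChange_self (I := 𝓘(ℝ, EG)) (mem_extChartAt_source g₀),
      ← hm₀, tangentCoordChange_self (I := 𝓘(ℝ, EM)) (mem_extChartAt_source m₀)]
    rfl
  have hU₀ : g₀ ∈ U := by
    refine ⟨hU₁₀, ?_⟩
    have : A g₀ ∘L C = 1 := by
      apply ContinuousLinearMap.ext
      intro v
      show A g₀ (C v) = v
      rw [hAg₀ (C v)]
      exact hDC v
    rw [this]
    exact isUnit_one
  -- the pointwise right inverse of `A`
  set σ : G → EM →L[ℝ] EG := fun g => C ∘L Ring.inverse (A g ∘L C) with hσ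
  have hAσ : ∀ g ∈ U, ∀ v, A g (σ g v) = v := by
    rintro g ⟨hg₁, hunit⟩ v
    have h1 : (A g ∘L C) * Ring.inverse (A g ∘L C) = 1 := Ring.mul_inverse_cancel _ hunit
    calc A g (σ g v) = ((A g ∘L C) * Ring.inverse (A g ∘L C)) v := rfl
      _ = v := by rw [h1]; rfl
  have hσs : ∀ g₁ ∈ U, ContMDiffAt 𝓘(ℝ, EG) 𝓘(ℝ, EM →L[ℝ] EG) (⊤ : ℕ∞) σ g₁ := by
    rintro g₁ ⟨hg₁, hunit⟩
    obtain ⟨u, hu⟩ := hunit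
    have hACs : ContMDiffAt 𝓘(ℝ, EG) 𝓘(ℝ, EM →L[ℝ] EM) (⊤ : ℕ∞) (fun g => A g ∘L C) g₁ :=
      (hF2 g₁ hg₁).clm_comp contMDiffAt_const
    have hinv : ContMDiffAt 𝓘(ℝ, EG) 𝓘(ℝ, EM →L[ℝ] EM) (⊤ : ℕ∞)
        (fun g => Ring.inverse (A g ∘L C)) g₁ := by
      exact ContDiffAt.comp_contMDiffAt
        (by rw [← hu]; exact contDiffAt_ringInverse ℝ u) hACs
    exact contMDiffAt_const.clm_comp hinv
  -- the data entering the construction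
  set b : G → EM := fun g =>
    tangentCoordChange 𝓘(ℝ, EM) (S.src g) m₀ (S.src g) (x (S.src g)) with hbdef
  have hbs : ∀ g₁ ∈ U₁, ContMDiffAt 𝓘(ℝ, EG) 𝓘(ℝ, EM) (⊤ : ℕ∞) b g₁ := by
    intro g₁ hg₁
    exact contMDiffAt_repin (Ψ := fun g => (⟨S.src g, x (S.src g)⟩ : TangentBundle 𝓘(ℝ, EM) M))
      (hx.comp S.smooth_src) m₀ hg₁.2
  set p : G → EG := fun g => σ g (b g) + θ g - σ g (A g (θ g)) with hpdef
  have hps : ∀ g₁ ∈ U, ContMDiffAt 𝓘(ℝ, EG) 𝓘(ℝ, EG) (⊤ : ℕ∞) p g₁ := by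
    intro g₁ hg₁
    have h1 := (hσs g₁ hg₁).clm_apply (hbs g₁ hg₁.1)
    have h2 := hθ g₁ hg₁.1.1.1
    have h3 := (hσs g₁ hg₁).clm_apply ((hF2 g₁ hg₁.1).clm_apply h2)
    exact (h1.add h2).sub h3
  -- the local section
  refine ⟨U, hUo, hU₀, fun g hg => hg.1.1.1, fun g hg => hg.1.1.2,
    fun g => tangentCoordChange 𝓘(ℝ, EG) g₀ g g (p g), ?_, ?_, ?_⟩
  · -- smoothness
    intro g₁ hg₁
    refine (Bundle.contMDiffAt_section g₁).2 ?_
    have hsm : ContMDiffAt 𝓘(ℝ, EG) 𝓘(ℝ, EG) (⊤ : ℕ∞)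
        (fun g => tangentCoordChange 𝓘(ℝ, EG) g₀ g₁ g (p g)) g₁ :=
      (contMDiffAt_coordChange_comp contMDiffAt_id hg₁.1.1.2
        (mem_chart_source _ _)).clm_apply (hps g₁ hg₁)
    refine hsm.congr_of_eventuallyEq ?_
    have hV : ∀ᶠ g in 𝓝 g₁, g ∈ U₁ ∧ g ∈ (chartAt EG g₁).source := by
      filter_upwards [hU₁o.mem_nhds hg₁.1,
        (chartAt EG g₁).open_source.mem_nhds (mem_chart_source _ _)] with g h1 h2 using ⟨h1, h2⟩
    filter_upwards [hV] with g hg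
    show (trivializationAt EG (TangentSpace 𝓘(ℝ, EG)) g₁
        ⟨g, tangentCoordChange 𝓘(ℝ, EG) g₀ g g (p g)⟩).2 = _
    rw [triv_snd]
    show tangentCoordChange 𝓘(ℝ, EG) g g₁ g (tangentCoordChange 𝓘(ℝ, EG) g₀ g g (p g)) = _
    rw [tangentCoordChange_comp (v := p g)]
    simp only [extChartAt_source]
    exact ⟨⟨hg.1.1.2, mem_chart_source _ _⟩, hg.2⟩
  · -- the lifting property
    intro g hg
    have hApg : A g (p g) = b g := by
      simp only [hpdef, map_add, map_sub, hAσ g hg]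
      abel
    rw [hF3 g hg.1 (p g)] at hApg
    have hsrcg : S.src g ∈ (extChartAt 𝓘(ℝ, EM) m₀).source := by
      simpa only [extChartAt_source, mem_preimage] using hg.1.2
    have h2 := congrArg (fun w => tangentCoordChange 𝓘(ℝ, EM) m₀ (S.src g) (S.src g) w) hApg
    simp only [hbdef] at h2
    erw [tcc_left_inv hsrcg, tcc_left_inv hsrcg] at h2
    exact h2
  · -- agreement with `θ` when `θ` is itself a lift
    intro g hg hlift
    have hAθ : A g (θ g) = b g := by
      rw [hF3 g hg.1 (θ g), hlift]
    show tangentCoordChange 𝓘(ℝ, EG) g₀ g g (p g) = _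
    rw [hpdef]
    show tangentCoordChange 𝓘(ℝ, EG) g₀ g g (σ g (b g) + θ g - σ g (A g (θ g))) = _
    rw [hAθ, add_sub_cancel_left]

section Main

set_option linter.unusedSectionVars false
set_option maxHeartbeats 1000000

open Set Function Bundle Topology Filter

theorem exists_star_vector_field
    [T2Space G] [SigmaCompactSpace G] [FiniteDimensional ℝ EG]
    (S : LieGroupoidStr EG EM G M)
    -- `α` is a submersion (it is automatically surjective, by `src_one`):
    (hsub : ∀ g, Function.Surjective (mfderiv 𝓘(ℝ, EG) 𝓘(ℝ, EM) S.src g))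
    (x : ∀ m : M, TangentSpace 𝓘(ℝ, EM) m)
    (hx : ContMDiff 𝓘(ℝ, EM) 𝓘(ℝ, EM).tangent (⊤ : ℕ∞)
      (fun m => (⟨m, x m⟩ : TangentBundle 𝓘(ℝ, EM) M))) :
    ∃ ξ : ∀ g : G, TangentSpace 𝓘(ℝ, EG) g,
      ContMDiff 𝓘(ℝ, EG) 𝓘(ℝ, EG).tangent (⊤ : ℕ∞)
        (fun g => (⟨g, ξ g⟩ : TangentBundle 𝓘(ℝ, EG) G)) ∧
      (∀ g, mfderiv 𝓘(ℝ, EG) 𝓘(ℝ, EM) S.src g (ξ g) = x (S.src g)) ∧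
      (∀ m, ξ (S.one m) = mfderiv 𝓘(ℝ, EM) 𝓘(ℝ, EG) S.one m (x m)) := by
  classical
  -- the constraint sets
  set t : ∀ g : G, Set (TangentSpace 𝓘(ℝ, EG) g) := fun g =>
    {v | mfderiv 𝓘(ℝ, EG) 𝓘(ℝ, EM) S.src g v = x (S.src g) ∧
      ∀ m, S.one m = g → v = mfderiv 𝓘(ℝ, EM) 𝓘(ℝ, EG) S.one m (x m)} with htdef
  have hconv : ∀ g, Convex ℝ (t g) := by
    intro g v hv w hw a c ha hc hac
    constructor
    · show mfderiv 𝓘(ℝ, EG) 𝓘(ℝ, EM) S.src g (a • v + c • w) = x (S.src g)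
      rw [map_add, map_smul, map_smul, hv.1, hw.1, ← add_smul, hac, one_smul]
    · intro m hm
      show a • v + c • w = _
      subst hm
      rw [hv.2 m rfl, hw.2 m rfl, ← add_smul, hac, one_smul]
  -- the chain rule along the unit section
  have hchain : ∀ m : M, mfderiv 𝓘(ℝ, EG) 𝓘(ℝ, EM) S.src (S.one m)
      (mfderiv 𝓘(ℝ, EM) 𝓘(ℝ, EG) S.one m (x m)) = x m := by
    intro m
    have h1 : MDifferentiableAt 𝓘(ℝ, EM) 𝓘(ℝ, EG) S.one m :=
      (S.smooth_one m).mdifferentiableAt (by simp)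
    have h2 : MDifferentiableAt 𝓘(ℝ, EG) 𝓘(ℝ, EM) S.src (S.one m) :=
      (S.smooth_src (S.one m)).mdifferentiableAt (by simp)
    have h3 := mfderiv_comp m h2 h1
    rw [show S.src ∘ S.one = id from funext S.src_one, mfderiv_id] at h3
    have h4 : (mfderiv 𝓘(ℝ, EG) 𝓘(ℝ, EM) S.src (S.one m)).comp
        (mfderiv 𝓘(ℝ, EM) 𝓘(ℝ, EG) S.one m) (x m) =
        ContinuousLinearMap.id ℝ (TangentSpace 𝓘(ℝ, EM) m) (x m) := by rw [← h3]; rfl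
    simpa using h4
  -- local solutions
  have hlocal : ∀ g₀ : G, ∃ U : Set G, IsOpen U ∧ g₀ ∈ U ∧
      ∃ s : ∀ g : G, TangentSpace 𝓘(ℝ, EG) g,
        (∀ g ∈ U, ContMDiffAt 𝓘(ℝ, EG) 𝓘(ℝ, EG).tangent (⊤ : ℕ∞)
          (fun g => (⟨g, s g⟩ : TangentBundle 𝓘(ℝ, EG) G)) g) ∧ ∀ g ∈ U, s g ∈ t g := by
    intro g₀
    by_cases hone : S.one (S.src g₀) = g₀
    · -- `g₀` lies on the unit section
      set Ψ : G → TangentBundle 𝓘(ℝ, EG) G := fun g =>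
        tangentMap 𝓘(ℝ, EM) 𝓘(ℝ, EG) S.one ⟨S.src g, x (S.src g)⟩ with hΨdef
      have hΨs : ContMDiff 𝓘(ℝ, EG) 𝓘(ℝ, EG).tangent (⊤ : ℕ∞) Ψ :=
        (S.smooth_one.contMDiff_tangentMap (by simp)).comp (hx.comp S.smooth_src)
      set θ : G → EG := fun g =>
        tangentCoordChange 𝓘(ℝ, EG) (Ψ g).proj g₀ (Ψ g).proj (Ψ g).2 with hθdef
      set W : Set G := (fun g => S.one (S.src g)) ⁻¹' (chartAt EG g₀).source with hWdef
      have hWo : IsOpen W :=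
        (chartAt EG g₀).open_source.preimage (S.smooth_one.comp S.smooth_src).continuous
      have hW₀ : g₀ ∈ W := by
        show S.one (S.src g₀) ∈ (chartAt EG g₀).source
        rw [hone]; exact mem_chart_source _ _
      have hθs : ∀ g ∈ W, ContMDiffAt 𝓘(ℝ, EG) 𝓘(ℝ, EG) (⊤ : ℕ∞) θ g := fun g hg =>
        contMDiffAt_repin hΨs g₀ hg
      obtain ⟨U, hUo, hU₀, hUW, hUchart, s, hs1, hs2, hs3⟩ :=
        exists_local_lift S hsub x hx g₀ θ W hWo hW₀ hθs
      refine ⟨U, hUo, hU₀, s, hs1, fun g hg => ⟨hs2 g hg, ?_⟩⟩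
      intro m hm
      have hsrcg : S.src g = m := by rw [← hm, S.src_one]
      have hgchart : g ∈ (extChartAt 𝓘(ℝ, EG) g₀).source := by
        simpa only [extChartAt_source] using hUchart hg
      have hθg : θ g = tangentCoordChange 𝓘(ℝ, EG) g g₀ g
          (mfderiv 𝓘(ℝ, EM) 𝓘(ℝ, EG) S.one m (x m)) := by
        show tangentCoordChange 𝓘(ℝ, EG) (S.one (S.src g)) g₀ (S.one (S.src g))
          (mfderiv 𝓘(ℝ, EM) 𝓘(ℝ, EG) S.one (S.src g) (x (S.src g))) = _
        rw [hsrcg, hm]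
      have hpremise : mfderiv 𝓘(ℝ, EG) 𝓘(ℝ, EM) S.src g
          (tangentCoordChange 𝓘(ℝ, EG) g₀ g g (θ g)) = x (S.src g) := by
        erw [hθg, tcc_left_inv hgchart, hsrcg, ← hm]
        exact hchain m
      erw [hs3 g hg hpremise, hθg, tcc_left_inv hgchart]
    · -- `g₀` does not lie on the unit section
      have hClc : IsClosed {g : G | S.one (S.src g) = g} :=
        isClosed_eq (S.smooth_one.comp S.smooth_src).continuous continuous_id
      obtain ⟨U, hUo, hU₀, hUW, hUchart, s, hs1, hs2, hs3⟩ :=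
        exists_local_lift S hsub x hx g₀ (fun _ => (0 : EG)) {g : G | S.one (S.src g) = g}ᶜ
          hClc.isOpen_compl hone (fun g _ => contMDiffAt_const)
      refine ⟨U, hUo, hU₀, s, hs1, fun g hg => ⟨hs2 g hg, ?_⟩⟩
      intro m hm
      exfalso
      apply hUW hg
      show S.one (S.src g) = g
      rw [← hm, S.src_one]
  obtain ⟨ξ, hξs, hξt⟩ := exists_global_section_of_local t hconv hlocal
  exact ⟨ξ, hξs, fun g => (hξt g).1, fun m => (hξt (S.one m)).2 m rfl⟩

end Main
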